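/- Let U, V̄, W : (−1, 1) → ℝ be differentiable, and for x ∈ (−1, 1) let λ(x) be the symmetric 2×2 matrix with entries λ₁₁ = e^{2U+V̄}cosh W, λ₂₂ = e^{2U−V̄}(1 − x²)cosh W, λ₁₂ = λ₂₁ = e^{2U}·√(1 − x²)·sinh W. Then for every x ∈ (−1, 1): (1 − x²)·[ ((det λ)′)²/(8(det λ)²) + (1/8)·Tr((λ⁻¹λ′)²) ] − 1/(1 − x²) = ((1 − x²)/4)·[ 12(U′)² + (V̄′)² + (W′)² + sinh²W·(V̄′ + x/(1 − x²))² ] + (x/2)·(V̄ − 6U)′ − 1, where ′ denotes d/dx. -/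

import Mathlib

open Real

/-- The fiber metric `λ` of Section 6 (ring parameterization, topology `S¹ × S²`), as a
matrix-valued function of `x` determined by target functions `U, V̄, W`. -/
noncomputable def lamRing (U Vb W : ℝ → ℝ) (x : ℝ) : Matrix (Fin 2) (Fin 2) ℝ :=
  !![Real.exp (2 * U x + Vb x) * Real.cosh (W x),
     Real.exp (2 * U x) * Real.sqrt (1 - x ^ 2) * Real.sinh (W x);
     Real.exp (2 * U x) * Real.sqrt (1 - x ^ 2) * Real.sinh (W x),
     Real.exp (2 * U x - Vb x) * (1 - x ^ 2) * Real.cosh (W x)]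

/-- The entrywise derivative `λ′` of the fiber metric. -/
noncomputable def lamRing' (U Vb W : ℝ → ℝ) (x : ℝ) : Matrix (Fin 2) (Fin 2) ℝ :=
  Matrix.of fun i j => deriv (fun t => lamRing U Vb W t i j) x

set_option maxHeartbeats 3200000 in
set_option maxRecDepth 8000 in
/-- The kinetic-term identity of Section 6 for horizons of topology `S¹ × S²`, rewriting
the λ-part of the area functional in terms of the target variables `(U, V̄, W)`. -/
theorem stmt15 (U Vb W : ℝ → ℝ)
    (hU : ∀ x ∈ Set.Ioo (-1 : ℝ) 1, DifferentiableAt ℝ U x)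
    (hV : ∀ x ∈ Set.Ioo (-1 : ℝ) 1, DifferentiableAt ℝ Vb x)
    (hW : ∀ x ∈ Set.Ioo (-1 : ℝ) 1, DifferentiableAt ℝ W x) :
    ∀ x ∈ Set.Ioo (-1 : ℝ) 1,
      (1 - x ^ 2) *
          ((deriv (fun t => (lamRing U Vb W t).det) x) ^ 2 /
              (8 * ((lamRing U Vb W x).det) ^ 2) +
            1 / 8 * Matrix.trace (((lamRing U Vb W x)⁻¹ * lamRing' U Vb W x) ^ 2)) -
          1 / (1 - x ^ 2)
        = (1 - x ^ 2) / 4 *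
            (12 * (deriv U x) ^ 2 + (deriv Vb x) ^ 2 + (deriv W x) ^ 2 +
              Real.sinh (W x) ^ 2 * (deriv Vb x + x / (1 - x ^ 2)) ^ 2) +
          x / 2 * deriv (fun t => Vb t - 6 * U t) x - 1 := by
  intro x hx
  obtain ⟨hx1, hx2⟩ := hx
  have hp : (0:ℝ) < 1 - x ^ 2 := by nlinarith
  have hs0 : 0 < Real.sqrt (1 - x ^ 2) := Real.sqrt_pos.mpr hp
  have hs2 : Real.sqrt (1 - x ^ 2) ^ 2 = 1 - x ^ 2 := Real.sq_sqrt hp.le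
  have hU' : HasDerivAt U (deriv U x) x := (hU x ⟨hx1, hx2⟩).hasDerivAt
  have hV' : HasDerivAt Vb (deriv Vb x) x := (hV x ⟨hx1, hx2⟩).hasDerivAt
  have hW' : HasDerivAt W (deriv W x) x := (hW x ⟨hx1, hx2⟩).hasDerivAt
  have h2UV : HasDerivAt (fun t => 2 * U t + Vb t) (2 * deriv U x + deriv Vb x) x :=
    (hU'.const_mul 2).add hV'
  have h2U : HasDerivAt (fun t => 2 * U t) (2 * deriv U x) x := hU'.const_mul 2
  have h2UmV : HasDerivAt (fun t => 2 * U t - Vb t) (2 * deriv U x - deriv Vb x) x :=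
    (hU'.const_mul 2).sub hV'
  have hq : HasDerivAt (fun t : ℝ => 1 - t ^ 2) (-(2 * x)) x := by
    simpa using ((hasDerivAt_pow 2 x).const_sub 1)
  have hsq : HasDerivAt (fun t : ℝ => Real.sqrt (1 - t ^ 2))
      (-(2 * x) / (2 * Real.sqrt (1 - x ^ 2))) x := hq.sqrt (ne_of_gt hp)
  -- entry derivatives
  have hA := h2UV.exp.mul hW'.cosh
  have hB := (h2U.exp.mul hsq).mul hW'.sinh
  have hC := (h2UmV.exp.mul hq).mul hW'.cosh
  have hD := (hU'.const_mul 4).exp.mul hq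
  have hVb6U := hV'.sub (hU'.const_mul 6)
  simp only [Pi.mul_def, Pi.sub_def] at hA hB hC hD hVb6U
  have f00 : (fun t => lamRing U Vb W t 0 0)
      = fun t => Real.exp (2 * U t + Vb t) * Real.cosh (W t) := by
    funext t; simp [lamRing]
  have f01 : (fun t => lamRing U Vb W t 0 1)
      = fun t => Real.exp (2 * U t) * Real.sqrt (1 - t ^ 2) * Real.sinh (W t) := by
    funext t; simp [lamRing]
  have f10 : (fun t => lamRing U Vb W t 1 0)
      = fun t => Real.exp (2 * U t) * Real.sqrt (1 - t ^ 2) * Real.sinh (W t) := by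
    funext t; simp [lamRing]
  have f11 : (fun t => lamRing U Vb W t 1 1)
      = fun t => Real.exp (2 * U t - Vb t) * (1 - t ^ 2) * Real.cosh (W t) := by
    funext t; simp [lamRing]
  have e00 := hA.deriv; rw [← f00] at e00
  have e01 := hB.deriv; rw [← f01] at e01
  have e10 := hB.deriv; rw [← f10] at e10
  have e11 := hC.deriv; rw [← f11] at e11
  -- the derivative matrix
  have hLmat : lamRing' U Vb W x
      = !![Real.exp (2 * U x + Vb x) * (2 * deriv U x + deriv Vb x) * Real.cosh (W x)
            + Real.exp (2 * U x + Vb x) * (Real.sinh (W x) * deriv W x),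
           (Real.exp (2 * U x) * (2 * deriv U x) * Real.sqrt (1 - x ^ 2)
            + Real.exp (2 * U x) * (-(2 * x) / (2 * Real.sqrt (1 - x ^ 2)))) * Real.sinh (W x)
            + Real.exp (2 * U x) * Real.sqrt (1 - x ^ 2) * (Real.cosh (W x) * deriv W x);
           (Real.exp (2 * U x) * (2 * deriv U x) * Real.sqrt (1 - x ^ 2)
            + Real.exp (2 * U x) * (-(2 * x) / (2 * Real.sqrt (1 - x ^ 2)))) * Real.sinh (W x)
            + Real.exp (2 * U x) * Real.sqrt (1 - x ^ 2) * (Real.cosh (W x) * deriv W x),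
           (Real.exp (2 * U x - Vb x) * (2 * deriv U x - deriv Vb x) * (1 - x ^ 2)
            + Real.exp (2 * U x - Vb x) * -(2 * x)) * Real.cosh (W x)
            + Real.exp (2 * U x - Vb x) * (1 - x ^ 2) * (Real.sinh (W x) * deriv W x)] := by
    ext i j
    fin_cases i <;> fin_cases j <;>
      simp only [Fin.zero_eta, Fin.mk_one, lamRing', Matrix.of_apply, Matrix.cons_val',
        Matrix.cons_val_zero, Matrix.cons_val_one, Matrix.head_cons, Matrix.head_fin_const,
        Matrix.empty_val', Matrix.cons_val_fin_one]
    · exact e00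
    · exact e01
    · exact e10
    · exact e11
  
  have hcsh := Real.cosh_sq_sub_sinh_sq (W x)
  have hdet : (lamRing U Vb W x).det
      = Real.exp (2 * U x) ^ 2 * Real.sqrt (1 - x ^ 2) ^ 2 := by
    simp only [lamRing, Matrix.det_fin_two_of]
    have hEE : Real.exp (2 * U x + Vb x) * Real.exp (2 * U x - Vb x)
        = Real.exp (2 * U x) ^ 2 := by
      rw [← Real.exp_add, sq, ← Real.exp_add]; congr 1; ring
    linear_combination ((1 - x ^ 2) * Real.cosh (W x) ^ 2) * hEE
      + (-(Real.exp (2 * U x) ^ 2 * Real.cosh (W x) ^ 2)) * hs2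
      + (Real.exp (2 * U x) ^ 2 * Real.sqrt (1 - x ^ 2) ^ 2) * hcsh
  have hdetpos : (0:ℝ) < (lamRing U Vb W x).det := by
    rw [hdet]; positivity
  have h4 : Real.exp (4 * U x) = Real.exp (2 * U x) ^ 2 := by
    rw [sq, ← Real.exp_add]; congr 1; ring
  have hdet' : deriv (fun t => (lamRing U Vb W t).det) x
      = Real.exp (2 * U x) ^ 2 * (4 * deriv U x) * (1 - x ^ 2)
        + Real.exp (2 * U x) ^ 2 * -(2 * x) := by
    have heq : (fun t => (lamRing U Vb W t).det)
        =ᶠ[nhds x] (fun t => Real.exp (4 * U t) * (1 - t ^ 2)) := by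
      filter_upwards [isOpen_Ioo.mem_nhds (Set.mem_Ioo.mpr ⟨hx1, hx2⟩)] with t ht
      obtain ⟨ht1, ht2⟩ := ht
      have htp : (0:ℝ) ≤ 1 - t ^ 2 := by nlinarith
      have hts : Real.sqrt (1 - t ^ 2) ^ 2 = 1 - t ^ 2 := Real.sq_sqrt htp
      have hEEt : Real.exp (2 * U t + Vb t) * Real.exp (2 * U t - Vb t)
          = Real.exp (4 * U t) := by
        rw [← Real.exp_add]; congr 1; ring
      have hE2t : Real.exp (2 * U t) * Real.exp (2 * U t) = Real.exp (4 * U t) := by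
        rw [← Real.exp_add]; congr 1; ring
      have hct := Real.cosh_sq_sub_sinh_sq (W t)
      simp only [lamRing, Matrix.det_fin_two_of]
      linear_combination ((1 - t ^ 2) * Real.cosh (W t) ^ 2) * hEEt
        + (-(Real.sqrt (1 - t ^ 2) ^ 2 * Real.sinh (W t) ^ 2)) * hE2t
        + (-(Real.exp (4 * U t) * Real.sinh (W t) ^ 2)) * hts
        + (Real.exp (4 * U t) * (1 - t ^ 2)) * hct
    rw [heq.deriv_eq, hD.deriv, h4]
  have hNinv : (lamRing U Vb W x)⁻¹ = ((lamRing U Vb W x).det)⁻¹ •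
      !![lamRing U Vb W x 1 1, -(lamRing U Vb W x 0 1);
         -(lamRing U Vb W x 1 0), lamRing U Vb W x 0 0] := by
    rw [Matrix.inv_def, Matrix.adjugate_fin_two, Ring.inverse_eq_inv']
  rw [congrFun f00 x, congrFun f01 x, congrFun f10 x, congrFun f11 x, hdet] at hNinv
  have h1ne : Real.sqrt (1 - x ^ 2) ≠ 0 := hs0.ne'
  have h2ne : (1 : ℝ) - x ^ 2 ≠ 0 := hp.ne'
  rw [hVb6U.deriv, hdet', hdet, hNinv, hLmat]
  have hpow2 : ∀ M : Matrix (Fin 2) (Fin 2) ℝ, M ^ 2 = M * M := fun M => sq M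
  simp only [hpow2, Matrix.smul_mul, Matrix.mul_smul, Matrix.mul_fin_two,
    Matrix.trace_smul, Matrix.trace_fin_two_of, smul_eq_mul]
  have hAp : Real.exp (2 * U x + Vb x) ≠ 0 := (Real.exp_pos _).ne'
  have hAm : Real.exp (2 * U x - Vb x) ≠ 0 := (Real.exp_pos _).ne'
  have hEne : Real.exp (2 * U x) ≠ 0 := (Real.exp_pos _).ne'
  have hAA : Real.exp (2 * U x + Vb x) * Real.exp (2 * U x - Vb x)
      = Real.exp (2 * U x) ^ 2 := by
    rw [← Real.exp_add, sq, ← Real.exp_add]; congr 1; ring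
  set s := Real.sqrt (1 - x ^ 2) with hsdef
  set P := 1 - x ^ 2 with hPdef
  set E := Real.exp (2 * U x) with hEdef
  set Ap := Real.exp (2 * U x + Vb x) with hApdef
  set Am := Real.exp (2 * U x - Vb x) with hAmdef
  set ch := Real.cosh (W x) with hchdef
  set sh := Real.sinh (W x) with hshdef
  set u := deriv U x with hudef
  set v := deriv Vb x with hvdef
  set w := deriv W x with hwdef
  clear_value s P E Ap Am ch sh u v w
  clear hU hV hW hU' hV' hW' h2UV h2U h2UmV hq hsq hA hB hC hD hVb6U f00 f01 f10 f11
    e00 e01 e10 e11 hLmat hdet hdetpos h4 hdet' hNinv hsdef hEdef hApdef hAmdef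
    hchdef hshdef hudef hvdef hwdef hx1 hx2
  have hsne : s ≠ 0 := hs0.ne'
  have hPne : P ≠ 0 := hp.ne'
  field_simp [hsne, hPne, hEne, hAp, hAm]
  ring_nf
  linear_combination
    (32*x*s^4*P^2*E^2*ch*sh^3*w + (-128:ℝ)*s^4*P^3*E^2*ch*sh^3*u*w + 32*x*s^2*P^3*E^2*ch*sh^3*w + (-48:ℝ)*s^4*P^3*E^2*sh^4*w^2 + 64*x*s^4*P^2*E^2*sh^4*u + 64*x*s^4*P^2*E^2*sh^2*u + (-32:ℝ)*x*s^4*P^2*E^2*sh^4*v + (-32:ℝ)*x*s^4*P^2*E^2*sh^2*v + 64*x*s^4*P^2*E^2*ch*sh*w + (-64:ℝ)*x^2*s^2*P^2*E^2*sh^4 + (-64:ℝ)*x^2*s^2*P^2*E^2*sh^2 + 32*x^2*s^2*P^2*Ap*Am*ch^2*sh^2 + 32*x^2*s^2*P^2*Ap*Am*ch^2 + 64*x*s^2*P^3*E^2*sh^4*u + 64*x*s^2*P^3*E^2*sh^2*u + (-64:ℝ)*s^4*P^3*E^2*ch*sh*u*w + (-128:ℝ)*s^4*P^3*E^2*sh^4*u^2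 + (-128:ℝ)*s^4*P^3*E^2*sh^2*u^2 + (-32:ℝ)*x*s^2*P^3*E^2*ch*sh*w + 16*x^2*P^3*E^2*sh^4 + 16*x^2*P^3*E^2*sh^2 + (-16:ℝ)*s^4*P^3*E^2*sh^4*v^2 + (-16:ℝ)*s^4*P^3*E^2*sh^2*v^2 + (-64:ℝ)*s^4*P^3*E^2*sh^2*w^2 + 16*s^4*P^3*E^2*ch^2*sh^2*w^2 + 16*s^4*P^3*E^2*ch^2*w^2 + (-64:ℝ)*x*s^2*P^3*Ap*Am*ch^2*sh^2*u + (-64:ℝ)*x*s^2*P^3*Ap*Am*ch^2*u + (-32:ℝ)*x*s^2*P^3*Ap*Am*ch*sh^3*w + (-32:ℝ)*x*s^2*P^3*Ap*Am*ch*sh*w + 32*x*s^2*P^3*Ap*Am*ch^2*sh^2*v + 32*x*s^2*P^3*Ap*Am*ch^2*v + 64*s^2*P^4*Ap*Am*ch*sh^3*u*w + 64*s^2*P^4*Ap*Am*ch*sh*u*w + 64*s^2*P^4*Ap*Am*ch^2*sh^2*u^2 + 64*s^2*P^4*Ap*Am*ch^2*u^2 + 16*s^2*P^4*Ap*Am*sh^4*w^2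 + 16*s^2*P^4*Ap*Am*sh^2*w^2 + 16*s^2*P^4*Ap*Am*ch^2*sh^2*v^2 + 16*s^2*P^4*Ap*Am*ch^2*v^2 + (-32:ℝ)*x*P^3*E^2*ch*sh^3*w + 32*x^3*P^3*E^2*ch*sh^3*w + (-32:ℝ)*x*P^3*E^2*ch*sh*w + 32*x^3*P^3*E^2*ch*sh*w + 64*P^4*E^2*ch*sh^3*u*w + (-64:ℝ)*x^2*P^4*E^2*ch*sh^3*u*w + 64*P^4*E^2*ch*sh*u*w + (-64:ℝ)*x^2*P^4*E^2*ch*sh*u*w + 16*P^4*E^2*sh^4*w^2 + (-16:ℝ)*x^2*P^4*E^2*sh^4*w^2 + 16*P^4*E^2*sh^2*w^2 + (-16:ℝ)*x^2*P^4*E^2*sh^2*w^2 + 32*x^2*P^2*E^2*sh^4 + 64*x^2*P^2*E^2*sh^2 + (-32:ℝ)*x^4*P^2*E^2*sh^4 + (-64:ℝ)*x^4*P^2*E^2*sh^2 + 32*x^2*P^2*E^2 + (-32:ℝ)*x^4*P^2*E^2 + (-64:ℝ)*x*P^3*E^2*sh^4*u + (-128:ℝ)*x*P^3*E^2*sh^2*u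 + 64*x^3*P^3*E^2*sh^4*u + 128*x^3*P^3*E^2*sh^2*u + (-64:ℝ)*x*P^3*E^2*u + 64*x^3*P^3*E^2*u + 32*x*P^3*E^2*sh^4*v + 64*x*P^3*E^2*sh^2*v + (-32:ℝ)*x^3*P^3*E^2*sh^4*v + (-64:ℝ)*x^3*P^3*E^2*sh^2*v + 32*x*P^3*E^2*v + (-32:ℝ)*x^3*P^3*E^2*v + 64*P^4*E^2*sh^4*u^2 + 128*P^4*E^2*sh^2*u^2 + (-64:ℝ)*x^2*P^4*E^2*sh^4*u^2 + (-128:ℝ)*x^2*P^4*E^2*sh^2*u^2 + 64*P^4*E^2*u^2 + (-64:ℝ)*x^2*P^4*E^2*u^2 + 16*P^4*E^2*sh^4*v^2 + 32*P^4*E^2*sh^2*v^2 + (-16:ℝ)*x^2*P^4*E^2*sh^4*v^2 + (-32:ℝ)*x^2*P^4*E^2*sh^2*v^2 + 16*P^4*E^2*v^2 + (-16:ℝ)*x^2*P^4*E^2*v^2) * hAA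
    + (64*x*s^4*P^2*E^2*Ap*Am*sh^2*u + (-32:ℝ)*x*s^4*P^2*E^2*Ap*Am*sh^2*v + 64*x*s^4*P^2*E^2*Ap*Am*ch*sh*w + (-64:ℝ)*x^2*s^2*P^2*E^2*Ap*Am*sh^2 + 16*s^6*P^2*E^4*sh^2*w^2 + 32*x^2*s^2*P^2*Ap^2*Am^2*ch^2 + 64*x*s^2*P^3*E^2*Ap*Am*sh^2*u + (-64:ℝ)*s^4*P^3*E^2*Ap*Am*ch*sh*u*w + (-128:ℝ)*s^4*P^3*E^2*Ap*Am*sh^2*u^2 + (-32:ℝ)*x*s^2*P^3*E^2*Ap*Am*ch*sh*w + 16*x^2*P^3*E^2*Ap*Am*sh^2 + (-16:ℝ)*s^4*P^3*E^2*Ap*Am*sh^2*v^2 + (-64:ℝ)*s^4*P^3*E^2*Ap*Am*sh^2*w^2 + 16*s^4*P^3*E^2*Ap*Am*ch^2*w^2 + (-64:ℝ)*x*s^2*P^3*Ap^2*Am^2*ch^2*u + (-32:ℝ)*x*s^2*P^3*Ap^2*Am^2*ch*sh*w + 32*x*s^2*P^3*Ap^2*Am^2*ch^2*v + 64*s^2*P^4*Ap^2*Am^2*ch*sh*u*w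 + 64*s^2*P^4*Ap^2*Am^2*ch^2*u^2 + 16*s^2*P^4*Ap^2*Am^2*sh^2*w^2 + 16*s^2*P^4*Ap^2*Am^2*ch^2*v^2 + 32*x^2*P^2*E^2*Ap*Am*sh^2 + (-32:ℝ)*x^4*P^2*E^2*Ap*Am*sh^2 + 32*x^2*P^2*E^2*Ap*Am + (-32:ℝ)*x^4*P^2*E^2*Ap*Am + 16*s^2*P^3*E^4*sh^2*w^2 + (-16:ℝ)*x^2*s^2*P^3*E^4*sh^2*w^2 + 16*s^2*P^3*E^4*w^2 + (-16:ℝ)*x^2*s^2*P^3*E^4*w^2 + (-64:ℝ)*x*P^3*E^2*Ap*Am*sh^2*u + 64*x^3*P^3*E^2*Ap*Am*sh^2*u + (-64:ℝ)*x*P^3*E^2*Ap*Am*u + 64*x^3*P^3*E^2*Ap*Am*u + 32*x*P^3*E^2*Ap*Am*sh^2*v + (-32:ℝ)*x^3*P^3*E^2*Ap*Am*sh^2*v + 32*x*P^3*E^2*Ap*Am*v + (-32:ℝ)*x^3*P^3*E^2*Ap*Am*v + 64*P^4*E^2*Ap*Am*sh^2*u^2 + (-64:ℝ)*x^2*P^4*E^2*Ap*Am*sh^2*u^2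 + 64*P^4*E^2*Ap*Am*u^2 + (-64:ℝ)*x^2*P^4*E^2*Ap*Am*u^2 + 16*P^4*E^2*Ap*Am*sh^2*v^2 + (-16:ℝ)*x^2*P^4*E^2*Ap*Am*sh^2*v^2 + 16*P^4*E^2*Ap*Am*v^2 + (-16:ℝ)*x^2*P^4*E^2*Ap*Am*v^2) * hcsh
    + (64*s^4*P^2*E^4*ch*sh^3*u*w + 64*s^4*P^2*E^4*sh^4*u^2 + 32*x^2*P^2*E^4 + (-48:ℝ)*x^2*P^2*E^4*sh^4 + (-128:ℝ)*x*P^3*E^4*u + 128*P^4*E^4*u^2 + (-64:ℝ)*s^4*E^4 + 192*x*s^4*P*E^4*u + (-32:ℝ)*x*s^4*P*E^4*v + (-32:ℝ)*x*s^4*P*E^4*sh^2*v + 64*s^4*P*E^4 + (-192:ℝ)*s^4*P^2*E^4*u^2 + (-16:ℝ)*s^4*P^2*E^4*v^2 + (-16:ℝ)*s^4*P^2*E^4*sh^2*v^2 + (-16:ℝ)*s^4*P^2*E^4*w^2 + (-16:ℝ)*x^2*s^4*E^4*sh^2 + 16*s^4*P^2*E^4*sh^4*w^2 + 16*s^4*P^2*E^4*sh^2*w^2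 + (-128:ℝ)*s^2*P^3*E^4*ch*sh^3*u*w + 32*x*P^3*E^4*ch*sh^3*w + (-48:ℝ)*s^2*P^3*E^4*sh^4*w^2 + 64*x*s^2*P^2*E^4*sh^2*u + (-32:ℝ)*x*s^2*P^2*E^4*sh^4*v + (-32:ℝ)*x*s^2*P^2*E^4*sh^2*v + 64*x*s^2*P^2*E^4*ch*sh*w + (-64:ℝ)*x^2*P^2*E^4*sh^2 + 32*x^2*P^2*E^2*Ap*Am*ch^2*sh^2 + 32*x^2*P^2*E^2*Ap*Am*ch^2 + 64*x*P^3*E^4*sh^4*u + 64*x*P^3*E^4*sh^2*u + (-64:ℝ)*s^2*P^3*E^4*ch*sh*u*w + (-128:ℝ)*s^2*P^3*E^4*sh^4*u^2 + (-128:ℝ)*s^2*P^3*E^4*sh^2*u^2 + (-32:ℝ)*x*P^3*E^4*ch*sh*w + (-16:ℝ)*s^2*P^3*E^4*sh^4*v^2 + (-16:ℝ)*s^2*P^3*E^4*sh^2*v^2 + (-64:ℝ)*s^2*P^3*E^4*sh^2*w^2 + 16*s^2*P^3*E^4*ch^2*sh^2*w^2 + 16*s^2*P^3*E^4*ch^2*w^2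 + (-64:ℝ)*x*P^3*E^2*Ap*Am*ch^2*sh^2*u + (-64:ℝ)*x*P^3*E^2*Ap*Am*ch^2*u + (-32:ℝ)*x*P^3*E^2*Ap*Am*ch*sh^3*w + (-32:ℝ)*x*P^3*E^2*Ap*Am*ch*sh*w + 32*x*P^3*E^2*Ap*Am*ch^2*sh^2*v + 32*x*P^3*E^2*Ap*Am*ch^2*v + 64*P^4*E^2*Ap*Am*ch*sh^3*u*w + 64*P^4*E^2*Ap*Am*ch*sh*u*w + 64*P^4*E^2*Ap*Am*ch^2*sh^2*u^2 + 64*P^4*E^2*Ap*Am*ch^2*u^2 + 16*P^4*E^2*Ap*Am*sh^4*w^2 + 16*P^4*E^2*Ap*Am*sh^2*w^2 + 16*P^4*E^2*Ap*Am*ch^2*sh^2*v^2 + 16*P^4*E^2*Ap*Am*ch^2*v^2 + 64*s^2*P^2*E^4*ch*sh^3*u*w + (-64:ℝ)*x^2*s^2*P^2*E^4*ch*sh^3*u*w + 64*s^2*P^2*E^4*sh^4*u^2 + (-64:ℝ)*x^2*s^2*P^2*E^4*sh^4*u^2 + (-64:ℝ)*s^2*E^4 + 64*x^2*s^2*E^4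 + 192*x*s^2*P*E^4*u + (-192:ℝ)*x^3*s^2*P*E^4*u + (-32:ℝ)*x*s^2*P*E^4*v + 32*x^3*s^2*P*E^4*v + (-32:ℝ)*x*s^2*P*E^4*sh^2*v + 32*x^3*s^2*P*E^4*sh^2*v + 64*s^2*P*E^4 + (-64:ℝ)*x^2*s^2*P*E^4 + (-192:ℝ)*s^2*P^2*E^4*u^2 + 192*x^2*s^2*P^2*E^4*u^2 + (-16:ℝ)*s^2*P^2*E^4*v^2 + 16*x^2*s^2*P^2*E^4*v^2 + (-16:ℝ)*s^2*P^2*E^4*sh^2*v^2 + 16*x^2*s^2*P^2*E^4*sh^2*v^2 + (-16:ℝ)*s^2*P^2*E^4*w^2 + 16*x^2*s^2*P^2*E^4*w^2 + (-16:ℝ)*x^2*s^2*E^4*sh^2 + 16*x^4*s^2*E^4*sh^2 + 16*s^2*P^2*E^4*sh^4*w^2 + (-16:ℝ)*x^2*s^2*P^2*E^4*sh^4*w^2 + 16*s^2*P^2*E^4*sh^2*w^2 + (-16:ℝ)*x^2*s^2*P^2*E^4*sh^2*w^2 + (-128:ℝ)*P^3*E^4*ch*sh^3*u*w + 128*x^2*P^3*E^4*ch*sh^3*u*w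 + (-32:ℝ)*P^3*E^4*sh^4*w^2 + 32*x^2*P^3*E^4*sh^4*w^2 + 64*x*P^2*E^4*sh^2*u + (-64:ℝ)*x^3*P^2*E^4*sh^2*u + (-32:ℝ)*x*P^2*E^4*sh^4*v + 32*x^3*P^2*E^4*sh^4*v + (-32:ℝ)*x*P^2*E^4*sh^2*v + 32*x^3*P^2*E^4*sh^2*v + 64*x*P^2*E^4*ch*sh*w + (-64:ℝ)*x^3*P^2*E^4*ch*sh*w + (-64:ℝ)*P^3*E^4*ch*sh*u*w + 64*x^2*P^3*E^4*ch*sh*u*w + (-128:ℝ)*P^3*E^4*sh^4*u^2 + 128*x^2*P^3*E^4*sh^4*u^2 + (-128:ℝ)*P^3*E^4*sh^2*u^2 + 128*x^2*P^3*E^4*sh^2*u^2 + (-16:ℝ)*P^3*E^4*sh^4*v^2 + 16*x^2*P^3*E^4*sh^4*v^2 + (-16:ℝ)*P^3*E^4*sh^2*v^2 + 16*x^2*P^3*E^4*sh^2*v^2 + (-32:ℝ)*P^3*E^4*sh^2*w^2 + 32*x^2*P^3*E^4*sh^2*w^2 + 16*P^3*E^4*w^2 + (-16:ℝ)*x^2*P^3*E^4*w^2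 + 64*P^2*E^4*ch*sh^3*u*w + (-128:ℝ)*x^2*P^2*E^4*ch*sh^3*u*w + 64*x^4*P^2*E^4*ch*sh^3*u*w + 64*P^2*E^4*sh^4*u^2 + (-128:ℝ)*x^2*P^2*E^4*sh^4*u^2 + 64*x^4*P^2*E^4*sh^4*u^2 + (-64:ℝ)*E^4 + 128*x^2*E^4 + (-64:ℝ)*x^4*E^4 + 192*x*P*E^4*u + (-384:ℝ)*x^3*P*E^4*u + 192*x^5*P*E^4*u + (-32:ℝ)*x*P*E^4*v + 64*x^3*P*E^4*v + (-32:ℝ)*x^5*P*E^4*v + (-32:ℝ)*x*P*E^4*sh^2*v + 64*x^3*P*E^4*sh^2*v + (-32:ℝ)*x^5*P*E^4*sh^2*v + 64*P*E^4 + (-128:ℝ)*x^2*P*E^4 + 64*x^4*P*E^4 + (-192:ℝ)*P^2*E^4*u^2 + 384*x^2*P^2*E^4*u^2 + (-192:ℝ)*x^4*P^2*E^4*u^2 + (-16:ℝ)*P^2*E^4*v^2 + 32*x^2*P^2*E^4*v^2 + (-16:ℝ)*x^4*P^2*E^4*v^2 + (-16:ℝ)*P^2*E^4*sh^2*v^2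 + 32*x^2*P^2*E^4*sh^2*v^2 + (-16:ℝ)*x^4*P^2*E^4*sh^2*v^2 + (-16:ℝ)*P^2*E^4*w^2 + 32*x^2*P^2*E^4*w^2 + (-16:ℝ)*x^4*P^2*E^4*w^2 + (-16:ℝ)*x^2*E^4*sh^2 + 32*x^4*E^4*sh^2 + (-16:ℝ)*x^6*E^4*sh^2 + 16*P^2*E^4*sh^4*w^2 + (-32:ℝ)*x^2*P^2*E^4*sh^4*w^2 + 16*x^4*P^2*E^4*sh^4*w^2 + 16*P^2*E^4*sh^2*w^2 + (-32:ℝ)*x^2*P^2*E^4*sh^2*w^2 + 16*x^4*P^2*E^4*sh^2*w^2) * hs2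
    + ((-32:ℝ)*x^2*P^2*E^4*sh^4 + (-48:ℝ)*x^2*P^2*E^4*sh^2 + 64*s^4*P^2*E^4*ch*sh^3*u*w + 64*s^4*P^2*E^4*sh^4*u^2 + 32*x^2*P^2*E^4 + (-128:ℝ)*x*P^3*E^4*u + 128*P^4*E^4*u^2 + (-64:ℝ)*s^4*E^4 + 192*x*s^4*P*E^4*u + (-32:ℝ)*x*s^4*P*E^4*v + (-32:ℝ)*x*s^4*P*E^4*sh^2*v + 64*s^4*P*E^4 + (-192:ℝ)*s^4*P^2*E^4*u^2 + (-16:ℝ)*s^4*P^2*E^4*v^2 + (-16:ℝ)*s^4*P^2*E^4*sh^2*v^2 + (-16:ℝ)*s^4*P^2*E^4*w^2 + (-16:ℝ)*x^2*s^4*E^4*sh^2 + 16*s^4*P^2*E^4*sh^4*w^2 + 16*s^4*P^2*E^4*sh^2*w^2 + (-128:ℝ)*s^2*P^3*E^4*ch*sh^3*u*w + 32*x*P^3*E^4*ch*sh^3*w + (-48:ℝ)*s^2*P^3*E^4*sh^4*w^2 + 64*x*s^2*P^2*E^4*sh^2*u + (-32:ℝ)*x*s^2*P^2*E^4*sh^4*v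 + (-32:ℝ)*x*s^2*P^2*E^4*sh^2*v + 64*x*s^2*P^2*E^4*ch*sh*w + 32*x^2*P^2*E^2*Ap*Am*ch^2*sh^2 + 32*x^2*P^2*E^2*Ap*Am*ch^2 + 64*x*P^3*E^4*sh^4*u + 64*x*P^3*E^4*sh^2*u + (-64:ℝ)*s^2*P^3*E^4*ch*sh*u*w + (-128:ℝ)*s^2*P^3*E^4*sh^4*u^2 + (-128:ℝ)*s^2*P^3*E^4*sh^2*u^2 + (-32:ℝ)*x*P^3*E^4*ch*sh*w + (-16:ℝ)*s^2*P^3*E^4*sh^4*v^2 + (-16:ℝ)*s^2*P^3*E^4*sh^2*v^2 + (-64:ℝ)*s^2*P^3*E^4*sh^2*w^2 + 16*s^2*P^3*E^4*ch^2*sh^2*w^2 + 16*s^2*P^3*E^4*ch^2*w^2 + (-64:ℝ)*x*P^3*E^2*Ap*Am*ch^2*sh^2*u + (-64:ℝ)*x*P^3*E^2*Ap*Am*ch^2*u + (-32:ℝ)*x*P^3*E^2*Ap*Am*ch*sh^3*w + (-32:ℝ)*x*P^3*E^2*Ap*Am*ch*sh*w + 32*x*P^3*E^2*Ap*Am*ch^2*sh^2*v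 + 32*x*P^3*E^2*Ap*Am*ch^2*v + 64*P^4*E^2*Ap*Am*ch*sh^3*u*w + 64*P^4*E^2*Ap*Am*ch*sh*u*w + 64*P^4*E^2*Ap*Am*ch^2*sh^2*u^2 + 64*P^4*E^2*Ap*Am*ch^2*u^2 + 16*P^4*E^2*Ap*Am*sh^4*w^2 + 16*P^4*E^2*Ap*Am*sh^2*w^2 + 16*P^4*E^2*Ap*Am*ch^2*sh^2*v^2 + 16*P^4*E^2*Ap*Am*ch^2*v^2 + 16*x^2*P*E^4*sh^2 + (-16:ℝ)*x^4*P*E^4*sh^2 + (-64:ℝ)*x^2*P*E^4 + (-192:ℝ)*x*P^2*E^4*u + 192*x^3*P^2*E^4*u + 192*P^3*E^4*u^2 + (-192:ℝ)*x^2*P^3*E^4*u^2 + (-64:ℝ)*P^3*E^4*ch*sh^3*u*w + 64*x^2*P^3*E^4*ch*sh^3*u*w + (-16:ℝ)*P^3*E^4*sh^4*w^2 + 16*x^2*P^3*E^4*sh^4*w^2 + (-16:ℝ)*P^3*E^4*sh^2*w^2 + 16*x^2*P^3*E^4*sh^2*w^2 + 32*x*P^2*E^4*sh^2*v + (-32:ℝ)*x^3*P^2*E^4*sh^2*v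 + 32*x*P^2*E^4*v + (-32:ℝ)*x^3*P^2*E^4*v + (-64:ℝ)*P^3*E^4*sh^4*u^2 + 64*x^2*P^3*E^4*sh^4*u^2 + 16*P^3*E^4*sh^2*v^2 + (-16:ℝ)*x^2*P^3*E^4*sh^2*v^2 + 16*P^3*E^4*v^2 + (-16:ℝ)*x^2*P^3*E^4*v^2 + 64*s^2*P^2*E^4*ch*sh^3*u*w + (-64:ℝ)*x^2*s^2*P^2*E^4*ch*sh^3*u*w + 64*s^2*P^2*E^4*sh^4*u^2 + (-64:ℝ)*x^2*s^2*P^2*E^4*sh^4*u^2 + (-64:ℝ)*s^2*E^4 + 64*x^2*s^2*E^4 + 192*x*s^2*P*E^4*u + (-192:ℝ)*x^3*s^2*P*E^4*u + (-32:ℝ)*x*s^2*P*E^4*v + 32*x^3*s^2*P*E^4*v + (-32:ℝ)*x*s^2*P*E^4*sh^2*v + 32*x^3*s^2*P*E^4*sh^2*v + 64*s^2*P*E^4 + (-64:ℝ)*x^2*s^2*P*E^4 + (-192:ℝ)*s^2*P^2*E^4*u^2 + 192*x^2*s^2*P^2*E^4*u^2 + (-16:ℝ)*s^2*P^2*E^4*v^2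 + 16*x^2*s^2*P^2*E^4*v^2 + (-16:ℝ)*s^2*P^2*E^4*sh^2*v^2 + 16*x^2*s^2*P^2*E^4*sh^2*v^2 + (-16:ℝ)*s^2*P^2*E^4*w^2 + 16*x^2*s^2*P^2*E^4*w^2 + (-16:ℝ)*x^2*s^2*E^4*sh^2 + 16*x^4*s^2*E^4*sh^2 + 16*s^2*P^2*E^4*sh^4*w^2 + (-16:ℝ)*x^2*s^2*P^2*E^4*sh^4*w^2 + 16*s^2*P^2*E^4*sh^2*w^2 + (-16:ℝ)*x^2*s^2*P^2*E^4*sh^2*w^2 + 16*P^3*E^4*w^2 + (-16:ℝ)*x^2*P^3*E^4*w^2 + 64*P*E^4) * hPdef
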